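/- Let P ∈ R be irreducible and suppose D(P) = F·P for some F ∈ R. Then F ≠ 0 and there exist complex numbers λ₀, λ₁, λ₂, λ₃ such that F = λ₀Y₀ + λ₁Y₁ + λ₂Y₂ + λ₃. -/

import Mathlib

open MvPolynomial

/-- In `R = ℂ[T,Q,Y₀,Y₁,Y₂]` (variables `X 0 = T`, `X 1 = Q`, `X 2 = Y₀`, `X 3 = Y₁`,
`X 4 = Y₂`), the polynomial `L = (1/4)(a(Y₀−Y₁)² + b(Y₀−Y₂)² + c(Y₁−Y₂)²)`. -/
noncomputable def Lpoly5 (a b c : ℂ) : MvPolynomial (Fin 5) ℂ :=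
  C (1 / 4 : ℂ) * (C a * (X 2 - X 3) ^ 2 + C b * (X 2 - X 4) ^ 2 + C c * (X 3 - X 4) ^ 2)

namespace Stmt7Aux

open Finsupp

noncomputable section

abbrev R5 := MvPolynomial (Fin 5) ℂ

/-- Y-degree weights. -/
def uY : Fin 5 → ℕ := fun i => if 2 ≤ i.val then 1 else 0
/-- T-degree weights. -/
def uT : Fin 5 → ℕ := fun i => if i.val = 0 then 1 else 0
/-- Q-degree weights. -/
def uQ : Fin 5 → ℕ := fun i => if i.val = 1 then 1 else 0

@[simp] lemma uY_0 : uY 0 = 0 := rfl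
@[simp] lemma uY_1 : uY 1 = 0 := rfl
@[simp] lemma uY_2 : uY 2 = 1 := rfl
@[simp] lemma uY_3 : uY 3 = 1 := rfl
@[simp] lemma uY_4 : uY 4 = 1 := rfl
@[simp] lemma uT_0 : uT 0 = 1 := rfl
@[simp] lemma uT_1 : uT 1 = 0 := rfl
@[simp] lemma uT_2 : uT 2 = 0 := rfl
@[simp] lemma uT_3 : uT 3 = 0 := rfl
@[simp] lemma uT_4 : uT 4 = 0 := rfl
@[simp] lemma uQ_0 : uQ 0 = 0 := rfl
@[simp] lemma uQ_1 : uQ 1 = 1 := rfl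
@[simp] lemma uQ_2 : uQ 2 = 0 := rfl
@[simp] lemma uQ_3 : uQ 3 = 0 := rfl
@[simp] lemma uQ_4 : uQ 4 = 0 := rfl

lemma weight_apply5 (u : Fin 5 → ℕ) (d : Fin 5 →₀ ℕ) :
    Finsupp.weight u d = d 0 * u 0 + d 1 * u 1 + d 2 * u 2 + d 3 * u 3 + d 4 * u 4 := by
  rw [Finsupp.weight_apply, Finsupp.sum_fintype]
  · rw [Fin.sum_univ_five]; simp [smul_eq_mul]
  · intro i; exact zero_smul _ _

lemma weightY (d : Fin 5 →₀ ℕ) : Finsupp.weight uY d = d 2 + d 3 + d 4 := by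
  rw [weight_apply5]; simp

lemma weightT (d : Fin 5 →₀ ℕ) : Finsupp.weight uT d = d 0 := by
  rw [weight_apply5]; simp

lemma weightQ (d : Fin 5 →₀ ℕ) : Finsupp.weight uQ d = d 1 := by
  rw [weight_apply5]; simp

lemma isWH_zero' {u : Fin 5 → ℕ} {m : ℕ} : IsWeightedHomogeneous u (0 : R5) m := by
  intro d hd
  simp at hd

lemma weight_single5 (u : Fin 5 → ℕ) (i : Fin 5) :
    Finsupp.weight u ((Finsupp.single i 1 : Fin 5 →₀ ℕ)) = u i := by
  rw [weight_apply5]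
  fin_cases i <;> simp

lemma sub_single_add {s : Fin 5 →₀ ℕ} {i : Fin 5} (h : s i ≠ 0) :
    s - Finsupp.single i 1 + Finsupp.single i 1 = s := by
  ext j
  simp only [Finsupp.add_apply, Finsupp.tsub_apply, Finsupp.single_apply]
  split_ifs with hij
  · subst hij; omega
  · omega

lemma sub_single_eq_iff {s d : Fin 5 →₀ ℕ} {i : Fin 5} (h : s i ≠ 0) :
    s - Finsupp.single i 1 = d ↔ s = d + Finsupp.single i 1 := by
  constructor
  · rintro rfl; exact (sub_single_add h).symm
  · rintro rfl
    ext j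
    simp only [Finsupp.add_apply, Finsupp.tsub_apply, Finsupp.single_apply]
    omega

lemma coeff_pderiv (i : Fin 5) (p : R5) (d : Fin 5 →₀ ℕ) :
    coeff d (pderiv i p) = ((d i + 1 : ℕ) : ℂ) * coeff (d + Finsupp.single i 1) p := by
  induction p using MvPolynomial.induction_on' with
  | monomial s a =>
    rw [pderiv_monomial, coeff_monomial, coeff_monomial]
    by_cases h : s i = 0
    · have hne : s ≠ d + Finsupp.single i 1 := by
        intro he
        have := DFunLike.congr_fun he i
        simp [Finsupp.add_apply, Finsupp.single_apply] at this
        omega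
      rw [if_neg hne, mul_zero]
      split_ifs with h2
      · simp [h]
      · rfl
    · rw [if_congr (sub_single_eq_iff h) rfl rfl]
      split_ifs with h2
      · have : s i = d i + 1 := by
          have := DFunLike.congr_fun h2 i
          simp [Finsupp.add_apply, Finsupp.single_apply] at this
          omega
        rw [this]
        push_cast
        ring
      · rw [mul_zero]
  | add p q hp hq =>
    simp only [map_add, coeff_add, hp, hq]
    ring

lemma isWH_pderiv {u : Fin 5 → ℕ} {p : R5} {m : ℕ}
    (h : IsWeightedHomogeneous u p m) (i : Fin 5) :
    IsWeightedHomogeneous u (pderiv i p) (m - u i) := by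
  intro d hd
  rw [coeff_pderiv] at hd
  have h2 : coeff (d + Finsupp.single i 1) p ≠ 0 := by
    intro h0; rw [h0, mul_zero] at hd; exact hd rfl
  have h3 := h h2
  rw [map_add, weight_single5] at h3
  omega

lemma pderiv_eq_zero_of_wh0 {u : Fin 5 → ℕ} {p : R5}
    (h : IsWeightedHomogeneous u p 0) {i : Fin 5} (hi : u i ≠ 0) :
    pderiv i p = 0 := by
  apply MvPolynomial.ext; intro d
  rw [coeff_pderiv, coeff_zero]
  by_cases h2 : coeff (d + Finsupp.single i 1) p = 0
  · rw [h2, mul_zero]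
  · exfalso
    have h3 := h h2
    rw [map_add, weight_single5] at h3
    omega

lemma coeff_X_mul_pderiv (i : Fin 5) (p : R5) (d : Fin 5 →₀ ℕ) :
    coeff d (X i * pderiv i p) = ((d i : ℕ) : ℂ) * coeff d p := by
  classical
  rw [coeff_X_mul']
  by_cases h : i ∈ d.support
  · rw [if_pos h, coeff_pderiv]
    have hdi : d i ≠ 0 := Finsupp.mem_support_iff.mp h
    rw [sub_single_add hdi]
    have h2 : (d - (Finsupp.single i 1 : Fin 5 →₀ ℕ)) i + 1 = d i := by
      simp [Finsupp.single_apply]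
      omega
    rw [h2]
  · rw [if_neg h]
    have : d i = 0 := Finsupp.notMem_support_iff.mp h
    rw [this]
    simp

lemma euler5 {p : R5} {m : ℕ} (h : IsWeightedHomogeneous uY p m) :
    X 2 * pderiv 2 p + X 3 * pderiv 3 p + X 4 * pderiv 4 p = C (m : ℂ) * p := by
  apply MvPolynomial.ext; intro d
  rw [coeff_add, coeff_add, coeff_X_mul_pderiv, coeff_X_mul_pderiv, coeff_X_mul_pderiv,
    coeff_C_mul]
  by_cases h0 : coeff d p = 0
  · rw [h0]; ring
  · have hw := h h0
    rw [weightY] at hw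
    have h4 : ((d 2 : ℕ) : ℂ) + ((d 3 : ℕ) : ℂ) + ((d 4 : ℕ) : ℂ) = (m : ℂ) := by
      rw [← hw]; push_cast; ring
    linear_combination (coeff d p) * h4

lemma sum_comp {u : Fin 5 → ℕ} (p : R5) {K : ℕ} (hK : weightedTotalDegree u p < K) :
    ∑ m ∈ Finset.range K, weightedHomogeneousComponent u m p = p := by
  classical
  apply MvPolynomial.ext; intro d
  rw [coeff_sum]
  simp only [coeff_weightedHomogeneousComponent]
  by_cases h0 : coeff d p = 0
  · rw [h0]; simp
  · have hd : Finsupp.weight u d ∈ Finset.range K :=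
      Finset.mem_range.mpr
        (lt_of_le_of_lt (le_weightedTotalDegree u (MvPolynomial.mem_support_iff.mpr h0)) hK)
    rw [Finset.sum_ite_eq (Finset.range K) (Finsupp.weight u d) (fun _ => coeff d p),
      if_pos hd]

lemma comp_top_ne_zero {u : Fin 5 → ℕ} {p : R5} (hp : p ≠ 0) :
    weightedHomogeneousComponent u (weightedTotalDegree u p) p ≠ 0 := by
  classical
  obtain ⟨s, hs, hsup⟩ :=
    Finset.exists_mem_eq_sup p.support (MvPolynomial.support_nonempty.mpr hp)
      (fun s => Finsupp.weight u s)
  intro h0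
  have h1 : coeff s (weightedHomogeneousComponent u (weightedTotalDegree u p) p)
      = coeff s p := by
    rw [coeff_weightedHomogeneousComponent,
      if_pos (show Finsupp.weight u s = weightedTotalDegree u p from hsup.symm)]
  rw [h0, coeff_zero] at h1
  exact MvPolynomial.mem_support_iff.mp hs h1.symm

lemma comp_top_mul (u : Fin 5 → ℕ) (p q : R5) :
    weightedHomogeneousComponent u (weightedTotalDegree u p + weightedTotalDegree u q) (p * q)
      = weightedHomogeneousComponent u (weightedTotalDegree u p) p *
        weightedHomogeneousComponent u (weightedTotalDegree u q) q := by
  classical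
  set a := weightedTotalDegree u p with ha
  set b := weightedTotalDegree u q with hb
  have hp := sum_comp (u := u) p (K := a + 1) (Nat.lt_succ_self a)
  have hq := sum_comp (u := u) q (K := b + 1) (Nat.lt_succ_self b)
  conv_lhs => rw [← hp, ← hq, Finset.sum_mul_sum]
  rw [map_sum]
  rw [Finset.sum_eq_single a]
  · rw [map_sum, Finset.sum_eq_single b]
    · exact IsWeightedHomogeneous.weightedHomogeneousComponent_same
        ((weightedHomogeneousComponent_isWeightedHomogeneous a p).mul
          (weightedHomogeneousComponent_isWeightedHomogeneous b q))
    · intro j hj hne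
      apply IsWeightedHomogeneous.weightedHomogeneousComponent_ne _
        ((weightedHomogeneousComponent_isWeightedHomogeneous a p).mul
          (weightedHomogeneousComponent_isWeightedHomogeneous j q))
      have : j < b + 1 := Finset.mem_range.mp hj
      omega
    · intro hbmem
      exact absurd (Finset.self_mem_range_succ b) hbmem
  · intro i hi hne
    rw [map_sum]
    apply Finset.sum_eq_zero
    intro j hj
    apply IsWeightedHomogeneous.weightedHomogeneousComponent_ne _
      ((weightedHomogeneousComponent_isWeightedHomogeneous i p).mul
        (weightedHomogeneousComponent_isWeightedHomogeneous j q))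
    have h1 : i < a + 1 := Finset.mem_range.mp hi
    have h2 : j < b + 1 := Finset.mem_range.mp hj
    omega
  · intro hamem
    exact absurd (Finset.self_mem_range_succ a) hamem

/-! ### Homogeneity of `Lpoly5` and of the pieces of the derivation -/

lemma isWH_L {a b c : ℂ} {u : Fin 5 → ℕ} {k : ℕ} (h2 : u 2 = k) (h3 : u 3 = k)
    (h4 : u 4 = k) : IsWeightedHomogeneous u (Lpoly5 a b c) (k + k) := by
  have hX : ∀ (i : Fin 5), u i = k → IsWeightedHomogeneous u (X i : R5) k := by
    intro i hi
    have := isWeightedHomogeneous_X ℂ u i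
    rwa [hi] at this
  have hsub : ∀ (i j : Fin 5), u i = k → u j = k →
      IsWeightedHomogeneous u (X i - X j : R5) k := by
    intro i j hi hj
    exact (mem_weightedHomogeneousSubmodule _ _ _ _).mp
      (Submodule.sub_mem _ ((mem_weightedHomogeneousSubmodule _ _ _ _).mpr (hX i hi))
        ((mem_weightedHomogeneousSubmodule _ _ _ _).mpr (hX j hj)))
  have hsq : ∀ (i j : Fin 5), u i = k → u j = k →
      IsWeightedHomogeneous u ((X i - X j : R5) ^ 2) (k + k) := by
    intro i j hi hj
    rw [sq]
    exact (hsub i j hi hj).mul (hsub i j hi hj)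
  have hCmul : ∀ (r : ℂ) (p : R5), IsWeightedHomogeneous u p (k + k) →
      IsWeightedHomogeneous u (C r * p) (k + k) := by
    intro r p hp
    have := (isWeightedHomogeneous_C u r).mul hp
    rwa [zero_add] at this
  unfold Lpoly5
  exact hCmul _ _ (((hCmul a _ (hsq 2 3 h2 h3)).add (hCmul b _ (hsq 2 4 h2 h4))).add
    (hCmul c _ (hsq 3 4 h3 h4)))

lemma isWH_XsqL {a b c : ℂ} {u : Fin 5 → ℕ} {k : ℕ} (h2 : u 2 = k) (h3 : u 3 = k)
    (h4 : u 4 = k) (i : Fin 5) (hi : u i = k) :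
    IsWeightedHomogeneous u (X i ^ 2 - Lpoly5 a b c : R5) (k + k) := by
  have hXi : IsWeightedHomogeneous u (X i ^ 2 : R5) (k + k) := by
    rw [sq]
    have hX := isWeightedHomogeneous_X ℂ u i
    rw [hi] at hX
    exact hX.mul hX
  exact (mem_weightedHomogeneousSubmodule _ _ _ _).mp
    (Submodule.sub_mem _ ((mem_weightedHomogeneousSubmodule _ _ _ _).mpr hXi)
      ((mem_weightedHomogeneousSubmodule _ _ _ _).mpr (isWH_L h2 h3 h4)))

/-- The explicit formula for the derivation. -/
def opD (w' a b c : ℂ) (p : R5) : R5 :=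
  C w' * pderiv 0 p + C w' * X 1 * pderiv 1 p + (X 2 ^ 2 - Lpoly5 a b c) * pderiv 2 p
    + (X 3 ^ 2 - Lpoly5 a b c) * pderiv 3 p + (X 4 ^ 2 - Lpoly5 a b c) * pderiv 4 p

/-- B-terms are `uY`-homogeneous of degree `m+1`. -/
lemma isWH_B_term {a b c : ℂ} {q : R5} {m : ℕ} (h : IsWeightedHomogeneous uY q m)
    (i : Fin 5) (hi : uY i = 1) :
    IsWeightedHomogeneous uY ((X i ^ 2 - Lpoly5 a b c) * pderiv i q) (m + 1) := by
  rcases Nat.eq_zero_or_pos m with hm | hm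
  · subst hm
    rw [pderiv_eq_zero_of_wh0 h (by rw [hi]; exact one_ne_zero), mul_zero]
    exact isWH_zero'
  · have hB := (isWH_XsqL (a := a) (b := b) (c := c) uY_2 uY_3 uY_4 i hi).mul
      (isWH_pderiv h i)
    rw [hi] at hB
    have : 1 + 1 + (m - 1) = m + 1 := by omega
    rwa [this] at hB

lemma isWH_A0_Y {w' : ℂ} {q : R5} {m : ℕ} (h : IsWeightedHomogeneous uY q m) :
    IsWeightedHomogeneous uY (C w' * pderiv 0 q) m := by
  have := (isWeightedHomogeneous_C uY w').mul (isWH_pderiv h 0)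
  simpa using this

lemma isWH_A1_Y {w' : ℂ} {q : R5} {m : ℕ} (h : IsWeightedHomogeneous uY q m) :
    IsWeightedHomogeneous uY (C w' * X 1 * pderiv 1 q) m := by
  have hCX : IsWeightedHomogeneous uY (C w' * X 1 : R5) 0 := by
    have := (isWeightedHomogeneous_C uY w').mul (isWeightedHomogeneous_X ℂ uY 1)
    simpa using this
  have := hCX.mul (isWH_pderiv h 1)
  simpa using this

lemma wHC_opD_Y_ne {w' a b c : ℂ} {q : R5} {m n : ℕ} (h : IsWeightedHomogeneous uY q m)
    (hn : m + 1 < n) :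
    weightedHomogeneousComponent uY n (opD w' a b c q) = 0 := by
  unfold opD
  rw [map_add, map_add, map_add, map_add]
  rw [IsWeightedHomogeneous.weightedHomogeneousComponent_ne _ (isWH_A0_Y h) (by omega),
    IsWeightedHomogeneous.weightedHomogeneousComponent_ne _ (isWH_A1_Y h) (by omega),
    IsWeightedHomogeneous.weightedHomogeneousComponent_ne _ (isWH_B_term h 2 uY_2) (by omega),
    IsWeightedHomogeneous.weightedHomogeneousComponent_ne _ (isWH_B_term h 3 uY_3) (by omega),
    IsWeightedHomogeneous.weightedHomogeneousComponent_ne _ (isWH_B_term h 4 uY_4) (by omega)]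
  simp

lemma wHC_opD_Y_succ {w' a b c : ℂ} {q : R5} {m : ℕ} (h : IsWeightedHomogeneous uY q m) :
    weightedHomogeneousComponent uY (m + 1) (opD w' a b c q)
      = (X 2 ^ 2 - Lpoly5 a b c) * pderiv 2 q + (X 3 ^ 2 - Lpoly5 a b c) * pderiv 3 q
        + (X 4 ^ 2 - Lpoly5 a b c) * pderiv 4 q := by
  unfold opD
  rw [map_add, map_add, map_add, map_add]
  rw [IsWeightedHomogeneous.weightedHomogeneousComponent_ne _ (isWH_A0_Y h) (by omega),
    IsWeightedHomogeneous.weightedHomogeneousComponent_ne _ (isWH_A1_Y h) (by omega),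
    IsWeightedHomogeneous.weightedHomogeneousComponent_same (isWH_B_term h 2 uY_2),
    IsWeightedHomogeneous.weightedHomogeneousComponent_same (isWH_B_term h 3 uY_3),
    IsWeightedHomogeneous.weightedHomogeneousComponent_same (isWH_B_term h 4 uY_4)]
  ring

lemma wHC_opD_T_ne {w' a b c : ℂ} {q : R5} {m n : ℕ} (h : IsWeightedHomogeneous uT q m)
    (hn : m < n) :
    weightedHomogeneousComponent uT n (opD w' a b c q) = 0 := by
  unfold opD
  rw [map_add, map_add, map_add, map_add]
  have h0 : IsWeightedHomogeneous uT (C w' * pderiv 0 q : R5) (m - 1) := by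
    have := (isWeightedHomogeneous_C uT w').mul (isWH_pderiv h 0)
    simpa using this
  have h1 : IsWeightedHomogeneous uT (C w' * X 1 * pderiv 1 q : R5) m := by
    have hCX : IsWeightedHomogeneous uT (C w' * X 1 : R5) 0 := by
      have := (isWeightedHomogeneous_C uT w').mul (isWeightedHomogeneous_X ℂ uT 1)
      simpa using this
    have := hCX.mul (isWH_pderiv h 1)
    simpa using this
  have hB : ∀ i : Fin 5, uT i = 0 → uY i = 1 →
      IsWeightedHomogeneous uT ((X i ^ 2 - Lpoly5 a b c) * pderiv i q : R5) m := by
    intro i hiT _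
    have := (isWH_XsqL (a := a) (b := b) (c := c) uT_2 uT_3 uT_4 i hiT).mul
      (isWH_pderiv h i)
    rw [hiT] at this
    simpa using this
  rw [IsWeightedHomogeneous.weightedHomogeneousComponent_ne _ h0 (by omega),
    IsWeightedHomogeneous.weightedHomogeneousComponent_ne _ h1 (by omega),
    IsWeightedHomogeneous.weightedHomogeneousComponent_ne _ (hB 2 uT_2 uY_2) (by omega),
    IsWeightedHomogeneous.weightedHomogeneousComponent_ne _ (hB 3 uT_3 uY_3) (by omega),
    IsWeightedHomogeneous.weightedHomogeneousComponent_ne _ (hB 4 uT_4 uY_4) (by omega)]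
  simp

lemma wHC_opD_Q_ne {w' a b c : ℂ} {q : R5} {m n : ℕ} (h : IsWeightedHomogeneous uQ q m)
    (hn : m < n) :
    weightedHomogeneousComponent uQ n (opD w' a b c q) = 0 := by
  unfold opD
  rw [map_add, map_add, map_add, map_add]
  have h0 : IsWeightedHomogeneous uQ (C w' * pderiv 0 q : R5) m := by
    have := (isWeightedHomogeneous_C uQ w').mul (isWH_pderiv h 0)
    simpa using this
  have h1 : IsWeightedHomogeneous uQ (C w' * X 1 * pderiv 1 q : R5) m := by
    rcases Nat.eq_zero_or_pos m with hm | hm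
    · subst hm
      rw [mul_assoc, pderiv_eq_zero_of_wh0 h (by simp)]
      simp only [mul_zero]
      exact isWH_zero'
    · have hCX : IsWeightedHomogeneous uQ (C w' * X 1 : R5) 1 := by
        have := (isWeightedHomogeneous_C uQ w').mul (isWeightedHomogeneous_X ℂ uQ 1)
        simpa using this
      have := hCX.mul (isWH_pderiv h 1)
      rw [uQ_1] at this
      have he : 1 + (m - 1) = m := by omega
      rwa [he] at this
  have hB : ∀ i : Fin 5, uQ i = 0 →
      IsWeightedHomogeneous uQ ((X i ^ 2 - Lpoly5 a b c) * pderiv i q : R5) m := by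
    intro i hiQ
    have := (isWH_XsqL (a := a) (b := b) (c := c) uQ_2 uQ_3 uQ_4 i hiQ).mul
      (isWH_pderiv h i)
    rw [hiQ] at this
    simpa using this
  rw [IsWeightedHomogeneous.weightedHomogeneousComponent_ne _ h0 (by omega),
    IsWeightedHomogeneous.weightedHomogeneousComponent_ne _ h1 (by omega),
    IsWeightedHomogeneous.weightedHomogeneousComponent_ne _ (hB 2 uQ_2) (by omega),
    IsWeightedHomogeneous.weightedHomogeneousComponent_ne _ (hB 3 uQ_3) (by omega),
    IsWeightedHomogeneous.weightedHomogeneousComponent_ne _ (hB 4 uQ_4) (by omega)]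
  simp


/-! ### X-multiplied terms -/

lemma isWH_X_term {q : R5} {m : ℕ} (hq : IsWeightedHomogeneous uY q m) (i : Fin 5)
    (hi : uY i = 1) : IsWeightedHomogeneous uY (X i * pderiv i q) m := by
  rcases Nat.eq_zero_or_pos m with hm | hm
  · subst hm
    rw [pderiv_eq_zero_of_wh0 hq (by rw [hi]; exact one_ne_zero), mul_zero]
    exact isWH_zero'
  · have := (isWeightedHomogeneous_X ℂ uY i).mul (isWH_pderiv hq i)
    rw [hi] at this
    have he : 1 + (m - 1) = m := by omega
    rwa [he] at this

/-! ### The translation `Yᵢ ↦ Yᵢ + 1` -/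

def tau : R5 →ₐ[ℂ] R5 :=
  aeval (fun i => if 2 ≤ i.val then X i + 1 else X i)

def tau' : R5 →ₐ[ℂ] R5 :=
  aeval (fun i => if 2 ≤ i.val then X i - 1 else X i)

lemma tau_tau' (p : R5) : tau (tau' p) = p := by
  have h : tau.comp tau' = AlgHom.id ℂ R5 := by
    apply MvPolynomial.algHom_ext
    intro i
    by_cases h : 2 ≤ i.val <;>
      simp [tau, tau', h]
  exact DFunLike.congr_fun h p

lemma tau'_tau (p : R5) : tau' (tau p) = p := by
  have h : tau'.comp tau = AlgHom.id ℂ R5 := by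
    apply MvPolynomial.algHom_ext
    intro i
    by_cases h : 2 ≤ i.val <;>
      simp [tau, tau', h]
  exact DFunLike.congr_fun h p

lemma tau_C (r : ℂ) : tau (C r) = C r := by
  simp [tau, aeval_C, MvPolynomial.algebraMap_eq]

lemma tau_X_hi (i : Fin 5) (h : 2 ≤ i.val) : tau (X i) = X i + 1 := by
  simp [tau, h]

lemma tau_X_lo (i : Fin 5) (h : ¬ 2 ≤ i.val) : tau (X i) = X i := by
  simp [tau, h]

lemma pderiv_tau (i : Fin 5) (p : R5) : pderiv i (tau p) = tau (pderiv i p) := by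
  induction p using MvPolynomial.induction_on with
  | C a => rw [tau_C, pderiv_C, map_zero]
  | add p q hp hq => simp only [map_add, hp, hq]
  | mul_X p j hp =>
    have hpd : pderiv i (X j : R5) = if j = i then 1 else 0 := by
      split_ifs with hij
      · subst hij; exact pderiv_X_self j
      · exact pderiv_X_of_ne hij
    have hXj : pderiv i (tau (X j)) = tau (pderiv i (X j)) := by
      by_cases h : 2 ≤ j.val
      · rw [tau_X_hi j h, map_add, pderiv_one, add_zero, hpd]
        split_ifs
        · exact (map_one tau).symm
        · exact (map_zero tau).symm
      · rw [tau_X_lo j h, hpd]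
        split_ifs
        · exact (map_one tau).symm
        · exact (map_zero tau).symm
    rw [map_mul, pderiv_mul, pderiv_mul, map_add, map_mul, map_mul, hp, hXj]

lemma tau_L (a b c : ℂ) : tau (Lpoly5 a b c) = Lpoly5 a b c := by
  have h2 : tau (X 2) = X 2 + 1 := tau_X_hi 2 (by decide)
  have h3 : tau (X 3) = X 3 + 1 := tau_X_hi 3 (by decide)
  have h4 : tau (X 4) = X 4 + 1 := tau_X_hi 4 (by decide)
  simp only [Lpoly5, map_mul, map_add, map_sub, map_pow, tau_C, h2, h3, h4]
  ring

set_option maxHeartbeats 1000000 in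
lemma no_first_integral (a b c : ℂ) {H : R5} {d : ℕ} (hd : 1 ≤ d)
    (hH : IsWeightedHomogeneous uY H d) (hHne : H ≠ 0)
    (heq : (X 2 ^ 2 - Lpoly5 a b c) * pderiv 2 H + (X 3 ^ 2 - Lpoly5 a b c) * pderiv 3 H
      + (X 4 ^ 2 - Lpoly5 a b c) * pderiv 4 H = 0) : False := by
  classical
  set Ht := tau H with hHt
  have htne : Ht ≠ 0 := by
    intro h0
    apply hHne
    have h1 := congrArg tau' h0
    rwa [tau'_tau, map_zero] at h1
  have e1 : (X 2 + 1) * pderiv 2 Ht + (X 3 + 1) * pderiv 3 Ht + (X 4 + 1) * pderiv 4 Ht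
      = C (d : ℂ) * Ht := by
    have h1 := congrArg tau (euler5 hH)
    simpa only [map_add, map_mul, tau_C, tau_X_hi 2 (by decide), tau_X_hi 3 (by decide),
      tau_X_hi 4 (by decide), ← pderiv_tau, ← hHt] using h1
  have e2 : ((X 2 + 1) ^ 2 - Lpoly5 a b c) * pderiv 2 Ht
      + ((X 3 + 1) ^ 2 - Lpoly5 a b c) * pderiv 3 Ht
      + ((X 4 + 1) ^ 2 - Lpoly5 a b c) * pderiv 4 Ht = 0 := by
    have h1 := congrArg tau heq
    simpa only [map_add, map_mul, map_sub, map_pow, map_zero, tau_L,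
      tau_X_hi 2 (by decide), tau_X_hi 3 (by decide), tau_X_hi 4 (by decide),
      ← pderiv_tau, ← hHt] using h1
  have e3 : pderiv 2 Ht + pderiv 3 Ht + pderiv 4 Ht
      = ((X 2 ^ 2 - Lpoly5 a b c) * pderiv 2 Ht + (X 3 ^ 2 - Lpoly5 a b c) * pderiv 3 Ht
        + (X 4 ^ 2 - Lpoly5 a b c) * pderiv 4 Ht) + 2 * (C (d : ℂ) * Ht) := by
    linear_combination 2 * e1 - e2
  set K := weightedTotalDegree uY Ht with hK
  set T := (Finset.range (K + 2)).filter
    (fun m => weightedHomogeneousComponent uY m Ht ≠ 0) with hT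
  have hrep : Ht = ∑ m ∈ Finset.range (K + 2), weightedHomogeneousComponent uY m Ht :=
    (sum_comp Ht (by omega)).symm
  have hTne : T.Nonempty := by
    rcases Finset.eq_empty_or_nonempty T with hemp | hne
    · exfalso
      apply htne
      rw [hrep]
      apply Finset.sum_eq_zero
      intro m hm
      by_contra hzero
      have hmT : m ∈ T := Finset.mem_filter.mpr ⟨hm, hzero⟩
      rw [hemp] at hmT
      exact absurd hmT (Finset.notMem_empty m)
    · exact hne
  set ν := T.min' hTne with hνdef
  have hνmem := Finset.min'_mem T hTne
  have hν1 : weightedHomogeneousComponent uY ν Ht ≠ 0 := (Finset.mem_filter.mp hνmem).2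
  have hνK : ν ≤ K := by
    by_contra hgt
    exact hν1 (weightedHomogeneousComponent_eq_zero ν Ht (by omega))
  have hlow : ∀ m, m < ν → weightedHomogeneousComponent uY m Ht = 0 := by
    intro m hm
    by_contra hco
    have hmT : m ∈ T := Finset.mem_filter.mpr ⟨Finset.mem_range.mpr (by omega), hco⟩
    have := Finset.min'_le T m hmT
    omega
  have hHm : ∀ m : ℕ, IsWeightedHomogeneous uY (weightedHomogeneousComponent uY m Ht) m :=
    fun m => weightedHomogeneousComponent_isWeightedHomogeneous m Ht
  have expandN : ∀ i : Fin 5, uY i = 1 →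
      weightedHomogeneousComponent uY ν (pderiv i Ht)
        = pderiv i (weightedHomogeneousComponent uY (ν + 1) Ht) := by
    intro i hi
    conv_lhs => rw [hrep]
    rw [map_sum, map_sum, Finset.sum_eq_single (ν + 1)]
    · apply IsWeightedHomogeneous.weightedHomogeneousComponent_same
      have h1 := isWH_pderiv (hHm (ν + 1)) i
      rw [hi] at h1
      simpa using h1
    · intro m hm hne
      rcases Nat.eq_zero_or_pos m with hm0 | hm0
      · subst hm0
        rw [pderiv_eq_zero_of_wh0 (hHm 0) (by rw [hi]; exact one_ne_zero), map_zero]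
      · apply IsWeightedHomogeneous.weightedHomogeneousComponent_ne _ (isWH_pderiv (hHm m) i)
        rw [hi]
        omega
    · intro hmem
      exact absurd (Finset.mem_range.mpr (by omega)) hmem
  have expandB : ∀ i : Fin 5, uY i = 1 →
      weightedHomogeneousComponent uY ν ((X i ^ 2 - Lpoly5 a b c) * pderiv i Ht) = 0 := by
    intro i hi
    conv_lhs => rw [hrep]
    rw [map_sum, Finset.mul_sum, map_sum]
    apply Finset.sum_eq_zero
    intro m hm
    by_cases hcase : m + 1 = ν
    · have hmlt : m < ν := by omega
      rw [hlow m hmlt, map_zero, mul_zero, map_zero]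
    · exact IsWeightedHomogeneous.weightedHomogeneousComponent_ne _
        (isWH_B_term (hHm m) i hi) (by omega)
  have expandX : ∀ i : Fin 5, uY i = 1 →
      weightedHomogeneousComponent uY ν (X i * pderiv i Ht)
        = X i * pderiv i (weightedHomogeneousComponent uY ν Ht) := by
    intro i hi
    conv_lhs => rw [hrep]
    rw [map_sum, Finset.mul_sum, map_sum, Finset.sum_eq_single ν]
    · exact IsWeightedHomogeneous.weightedHomogeneousComponent_same
        (isWH_X_term (hHm ν) i hi)
    · intro m hm hne
      exact IsWeightedHomogeneous.weightedHomogeneousComponent_ne _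
        (isWH_X_term (hHm m) i hi) (Ne.symm hne)
    · intro hmem
      exact absurd (Finset.mem_range.mpr (by omega)) hmem
  have c3 := congrArg (weightedHomogeneousComponent uY ν) e3
  simp only [map_add] at c3
  rw [expandN 2 rfl, expandN 3 rfl, expandN 4 rfl, expandB 2 rfl, expandB 3 rfl,
    expandB 4 rfl] at c3
  have h2C : weightedHomogeneousComponent uY ν (2 * (C (d : ℂ) * Ht))
      = 2 * (C (d : ℂ) * weightedHomogeneousComponent uY ν Ht) := by
    have h2 : (2 : R5) * (C (d : ℂ) * Ht) = C (2 * (d : ℂ)) * Ht := by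
      rw [C_mul, map_ofNat]
      ring
    rw [h2, weightedHomogeneousComponent_C_mul, C_mul, map_ofNat]
    ring
  rw [h2C] at c3
  have e1' : (X 2 * pderiv 2 Ht + X 3 * pderiv 3 Ht + X 4 * pderiv 4 Ht)
      + (pderiv 2 Ht + pderiv 3 Ht + pderiv 4 Ht) = C (d : ℂ) * Ht := by
    linear_combination e1
  have c1 := congrArg (weightedHomogeneousComponent uY ν) e1'
  simp only [map_add] at c1
  rw [expandX 2 rfl, expandX 3 rfl, expandX 4 rfl, expandN 2 rfl, expandN 3 rfl,
    expandN 4 rfl, weightedHomogeneousComponent_C_mul] at c1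
  have hEν := euler5 (hHm ν)
  have hfin : C ((ν : ℂ) + (d : ℂ)) * weightedHomogeneousComponent uY ν Ht = 0 := by
    rw [map_add]
    linear_combination c1 - c3 - hEν
  have hcast : ((ν : ℂ) + (d : ℂ)) ≠ 0 := by
    have h1 : ((ν + d : ℕ) : ℂ) ≠ 0 := Nat.cast_ne_zero.mpr (by omega)
    push_cast at h1
    exact h1
  rcases mul_eq_zero.mp hfin with h | h
  · rw [C_eq_zero] at h
    exact hcast h
  · exact hν1 h


lemma finsupp5_ext {s t : Fin 5 →₀ ℕ} (h0 : s 0 = t 0) (h1 : s 1 = t 1) (h2 : s 2 = t 2)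
    (h3 : s 3 = t 3) (h4 : s 4 = t 4) : s = t := by
  ext j
  obtain ⟨jv, hj⟩ := j
  interval_cases jv
  · exact h0
  · exact h1
  · exact h2
  · exact h3
  · exact h4

@[simp] lemma pderiv_X_ne5 {i j : Fin 5} (h : i ≠ j) : pderiv i (X j : R5) = 0 :=
  pderiv_X_of_ne (Ne.symm h)

end

end Stmt7Aux

open Stmt7Aux in
set_option maxHeartbeats 1000000 in
/-- if `P ∈ R` is irreducible and `D P = F·P` for some `F ∈ R`, then `F ≠ 0` and
`F = λ₀Y₀ + λ₁Y₁ + λ₂Y₂ + λ₃` for some complex numbers `λᵢ`. -/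
theorem stmt_7 (α β γ : ℚ)
    (hα : ∃ n : ℕ, 0 < n ∧ α = 1 / n) (hβ : ∃ n : ℕ, 0 < n ∧ β = 1 / n)
    (hγ : ∃ n : ℕ, 0 < n ∧ γ = 1 / n)
    (h0 : 0 < α) (h1 : α < β) (h2 : β < γ) (h3 : γ < 1) (h4 : α + β < γ)
    (a b c w : ℂ)
    (ha : a = (γ : ℂ) * (1 - (α : ℂ) - (β : ℂ)) + 2 * (α : ℂ) * (β : ℂ))
    (hb : b = ((α : ℂ) + (β : ℂ)) * ((γ : ℂ) - (α : ℂ) - (β : ℂ)) +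
        2 * (α : ℂ) * (β : ℂ) - (γ : ℂ) + 1)
    (hc : c = (γ : ℂ) * ((α : ℂ) + (β : ℂ) - (γ : ℂ) + 1) - 2 * (α : ℂ) * (β : ℂ))
    (hw : w = 1 - (γ : ℂ))
    (D : Derivation ℂ (MvPolynomial (Fin 5) ℂ) (MvPolynomial (Fin 5) ℂ))
    (hDT : D (X 0) = C w)
    (hDQ : D (X 1) = C w * X 1)
    (hDY0 : D (X 2) = (X 2) ^ 2 - Lpoly5 a b c)
    (hDY1 : D (X 3) = (X 3) ^ 2 - Lpoly5 a b c)
    (hDY2 : D (X 4) = (X 4) ^ 2 - Lpoly5 a b c)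
    (P F : MvPolynomial (Fin 5) ℂ) (hP : Irreducible P) (hDP : D P = F * P) :
    F ≠ 0 ∧ ∃ l₀ l₁ l₂ l₃ : ℂ, F = C l₀ * X 2 + C l₁ * X 3 + C l₂ * X 4 + C l₃ := by
  classical
  have hwne : w ≠ 0 := by
    rw [hw]
    intro hcon
    have hγ1 : (γ : ℂ) = 1 := by linear_combination -hcon
    have hγ1' : γ = 1 := by exact_mod_cast hγ1
    rw [hγ1'] at h3
    exact lt_irrefl _ h3
  have hPne : P ≠ 0 := hP.ne_zero
  -- the derivation is given by the explicit formula
  have hDeq : D = ((C w : MvPolynomial (Fin 5) ℂ) • pderiv (0 : Fin 5)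
      + ((C w * X 1 : MvPolynomial (Fin 5) ℂ)) • pderiv (1 : Fin 5)
      + ((X 2 ^ 2 - Lpoly5 a b c : MvPolynomial (Fin 5) ℂ)) • pderiv (2 : Fin 5)
      + ((X 3 ^ 2 - Lpoly5 a b c : MvPolynomial (Fin 5) ℂ)) • pderiv (3 : Fin 5)
      + ((X 4 ^ 2 - Lpoly5 a b c : MvPolynomial (Fin 5) ℂ)) • pderiv (4 : Fin 5) :
        Derivation ℂ (MvPolynomial (Fin 5) ℂ) (MvPolynomial (Fin 5) ℂ)) := by
    apply MvPolynomial.derivation_ext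
    intro i
    fin_cases i <;>
      simp [hDT, hDQ, hDY0, hDY1, hDY2, Derivation.add_apply, Derivation.smul_apply,
        pderiv_X_ne5, smul_eq_mul]
  have hD : ∀ p : MvPolynomial (Fin 5) ℂ, D p = opD w a b c p := by
    intro p
    rw [hDeq]
    simp only [Derivation.add_apply, Derivation.smul_apply, smul_eq_mul]
    rfl
  -- ### Part 1 : `F ≠ 0`
  have hF : F ≠ 0 := by
    intro hF0
    rw [hF0, zero_mul] at hDP
    rcases Nat.eq_zero_or_pos (weightedTotalDegree uY P) with hd0 | hd1
    · -- `P` contains no `Y` variable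
      have hP0 : IsWeightedHomogeneous uY P 0 := by
        have hs := sum_comp (u := uY) P (K := 1) (by omega)
        rw [Finset.sum_range_one] at hs
        rw [← hs]
        exact weightedHomogeneousComponent_isWeightedHomogeneous 0 P
      have hpd2 := pderiv_eq_zero_of_wh0 hP0 (show uY 2 ≠ 0 by simp)
      have hpd3 := pderiv_eq_zero_of_wh0 hP0 (show uY 3 ≠ 0 by simp)
      have hpd4 := pderiv_eq_zero_of_wh0 hP0 (show uY 4 ≠ 0 by simp)
      have heq2 : C w * pderiv 0 P + C w * X 1 * pderiv 1 P = 0 := by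
        have hthis := hD P
        rw [hDP] at hthis
        unfold opD at hthis
        rw [hpd2, hpd3, hpd4] at hthis
        simp only [mul_zero, add_zero] at hthis
        exact hthis.symm
      have hrel : ∀ t : Fin 5 →₀ ℕ, ((t 0 + 1 : ℕ) : ℂ) * coeff (t + Finsupp.single 0 1) P
          + ((t 1 : ℕ) : ℂ) * coeff t P = 0 := by
        intro t
        have hco := congrArg (coeff t) heq2
        rw [coeff_add, coeff_zero, coeff_C_mul, coeff_pderiv,
          show C w * X 1 * pderiv 1 P = C w * (X 1 * pderiv 1 P) from by ring,
          coeff_C_mul, coeff_X_mul_pderiv] at hco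
        have hfac : w * (((t 0 + 1 : ℕ) : ℂ) * coeff (t + Finsupp.single 0 1) P
            + ((t 1 : ℕ) : ℂ) * coeff t P) = 0 := by linear_combination hco
        rcases mul_eq_zero.mp hfac with hcc | hcc
        · exact absurd hcc hwne
        · exact hcc
      have hQfree : ∀ s ∈ P.support, s 1 = 0 := by
        by_contra hcon
        push_neg at hcon
        obtain ⟨s₀, hs₀, hns₀⟩ := hcon
        have hS1 : (P.support.filter (fun s => s 1 ≠ 0)).Nonempty :=
          ⟨s₀, Finset.mem_filter.mpr ⟨hs₀, hns₀⟩⟩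
        obtain ⟨s, hsS, hmax⟩ :=
          Finset.exists_max_image (P.support.filter (fun s => s 1 ≠ 0)) (fun s => s 0) hS1
        obtain ⟨hsup, hs1⟩ := Finset.mem_filter.mp hsS
        have hcs : coeff s P ≠ 0 := MvPolynomial.mem_support_iff.mp hsup
        have hc := hrel s
        have hnz : coeff (s + Finsupp.single 0 1) P ≠ 0 := by
          intro hzz
          rw [hzz, mul_zero, zero_add] at hc
          rcases mul_eq_zero.mp hc with hcc | hcc
          · exact hs1 (by exact_mod_cast hcc)
          · exact hcs hcc
        have hmem : (s + Finsupp.single 0 1) ∈ P.support.filter (fun s => s 1 ≠ 0) := by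
          refine Finset.mem_filter.mpr ⟨MvPolynomial.mem_support_iff.mpr hnz, ?_⟩
          simp only [Finsupp.add_apply, Finsupp.single_apply]
          simpa using hs1
        have hle := hmax _ hmem
        simp [Finsupp.add_apply, Finsupp.single_apply] at hle
      have hTfree : ∀ t : Fin 5 →₀ ℕ, t 0 ≠ 0 → coeff t P = 0 := by
        intro t ht
        have hc := hrel (t - Finsupp.single 0 1)
        rw [sub_single_add ht] at hc
        have hz2 : (((t - Finsupp.single 0 1 : Fin 5 →₀ ℕ) 1 : ℕ) : ℂ)
            * coeff (t - Finsupp.single 0 1) P = 0 := by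
          by_cases hcc : coeff (t - Finsupp.single 0 1) P = 0
          · rw [hcc, mul_zero]
          · have := hQfree _ (MvPolynomial.mem_support_iff.mpr hcc)
            rw [this]
            simp
        rw [hz2, add_zero] at hc
        rcases mul_eq_zero.mp hc with hcc | hcc
        · rw [Nat.cast_eq_zero] at hcc
          omega
        · exact hcc
      have hsupp0 : ∀ s ∈ P.support, s = (0 : Fin 5 →₀ ℕ) := by
        intro s hs
        have hs0 : s 0 = 0 := by
          by_contra hcc
          exact MvPolynomial.mem_support_iff.mp hs (hTfree s hcc)
        have hs1 : s 1 = 0 := hQfree s hs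
        have hsY := hP0 (MvPolynomial.mem_support_iff.mp hs)
        rw [weightY] at hsY
        refine finsupp5_ext ?_ ?_ ?_ ?_ ?_ <;> simp <;> omega
      have hPC : P = C (coeff 0 P) := by
        apply MvPolynomial.ext
        intro t
        rw [coeff_C]
        by_cases ht : t = 0
        · subst ht; rw [if_pos rfl]
        · rw [if_neg (fun hcc => ht hcc.symm)]
          by_contra hcc
          exact ht (hsupp0 t (MvPolynomial.mem_support_iff.mpr hcc))
      rcases eq_or_ne (coeff 0 P) 0 with hc0 | hc0
      · rw [hc0, map_zero] at hPC
        exact hPne hPC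
      · apply hP.not_isUnit
        rw [hPC]
        exact IsUnit.of_mul_eq_one (C (coeff 0 P)⁻¹)
          (by rw [← C_mul, mul_inv_cancel₀ hc0, C_1])
    · -- `P` has positive `Y`-degree: contradiction with `no_first_integral`
      set N := weightedTotalDegree uY P with hN
      have hrepP : P = ∑ m ∈ Finset.range (N + 1),
          weightedHomogeneousComponent uY m P :=
        (sum_comp P (Nat.lt_succ_self _)).symm
      have hBH : (X 2 ^ 2 - Lpoly5 a b c)
            * pderiv 2 (weightedHomogeneousComponent uY N P)
          + (X 3 ^ 2 - Lpoly5 a b c)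
            * pderiv 3 (weightedHomogeneousComponent uY N P)
          + (X 4 ^ 2 - Lpoly5 a b c)
            * pderiv 4 (weightedHomogeneousComponent uY N P)
          = 0 := by
        have h0 : weightedHomogeneousComponent uY (N + 1) (D P) = 0 := by
          rw [hDP]; exact map_zero _
        rw [hrepP, map_sum] at h0
        simp only [hD] at h0
        rw [map_sum, Finset.sum_eq_single N] at h0
        · rwa [wHC_opD_Y_succ
            (weightedHomogeneousComponent_isWeightedHomogeneous N P)]
            at h0
        · intro m hm hne
          exact wHC_opD_Y_ne (weightedHomogeneousComponent_isWeightedHomogeneous m P)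
            (by have := Finset.mem_range.mp hm; omega)
        · intro hmem
          exact absurd (Finset.self_mem_range_succ _) hmem
      exact no_first_integral a b c hd1
        (weightedHomogeneousComponent_isWeightedHomogeneous _ P)
        (comp_top_ne_zero hPne) hBH
  -- ### Part 2 : the shape of `F`
  have hDcompT : ∀ n, weightedTotalDegree uT P < n →
      weightedHomogeneousComponent uT n (D P) = 0 := by
    intro n hn
    have hrepP : P = ∑ m ∈ Finset.range (weightedTotalDegree uT P + 1),
        weightedHomogeneousComponent uT m P :=
      (sum_comp P (Nat.lt_succ_self _)).symm
    conv_lhs => rw [hrepP]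
    rw [map_sum]
    simp only [hD]
    rw [map_sum]
    apply Finset.sum_eq_zero
    intro m hm
    exact wHC_opD_T_ne (weightedHomogeneousComponent_isWeightedHomogeneous m P)
      (by have := Finset.mem_range.mp hm; omega)
  have hDcompQ : ∀ n, weightedTotalDegree uQ P < n →
      weightedHomogeneousComponent uQ n (D P) = 0 := by
    intro n hn
    have hrepP : P = ∑ m ∈ Finset.range (weightedTotalDegree uQ P + 1),
        weightedHomogeneousComponent uQ m P :=
      (sum_comp P (Nat.lt_succ_self _)).symm
    conv_lhs => rw [hrepP]
    rw [map_sum]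
    simp only [hD]
    rw [map_sum]
    apply Finset.sum_eq_zero
    intro m hm
    exact wHC_opD_Q_ne (weightedHomogeneousComponent_isWeightedHomogeneous m P)
      (by have := Finset.mem_range.mp hm; omega)
  have hDcompY : ∀ n, weightedTotalDegree uY P + 1 < n →
      weightedHomogeneousComponent uY n (D P) = 0 := by
    intro n hn
    have hrepP : P = ∑ m ∈ Finset.range (weightedTotalDegree uY P + 1),
        weightedHomogeneousComponent uY m P :=
      (sum_comp P (Nat.lt_succ_self _)).symm
    conv_lhs => rw [hrepP]
    rw [map_sum]
    simp only [hD]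
    rw [map_sum]
    apply Finset.sum_eq_zero
    intro m hm
    exact wHC_opD_Y_ne (weightedHomogeneousComponent_isWeightedHomogeneous m P)
      (by have := Finset.mem_range.mp hm; omega)
  have hTF : weightedTotalDegree uT F = 0 := by
    by_contra hne0
    have hv := hDcompT (weightedTotalDegree uT F + weightedTotalDegree uT P) (by omega)
    rw [hDP, comp_top_mul] at hv
    exact mul_ne_zero (comp_top_ne_zero hF) (comp_top_ne_zero hPne) hv
  have hQF : weightedTotalDegree uQ F = 0 := by
    by_contra hne0
    have hv := hDcompQ (weightedTotalDegree uQ F + weightedTotalDegree uQ P) (by omega)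
    rw [hDP, comp_top_mul] at hv
    exact mul_ne_zero (comp_top_ne_zero hF) (comp_top_ne_zero hPne) hv
  have hYF : weightedTotalDegree uY F ≤ 1 := by
    by_contra hgt
    push_neg at hgt
    have hv := hDcompY (weightedTotalDegree uY F + weightedTotalDegree uY P) (by omega)
    rw [hDP, comp_top_mul] at hv
    exact mul_ne_zero (comp_top_ne_zero hF) (comp_top_ne_zero hPne) hv
  have hsupp : ∀ s ∈ F.support, s 0 = 0 ∧ s 1 = 0 ∧ s 2 + s 3 + s 4 ≤ 1 := by
    intro s hs
    have hT' := le_weightedTotalDegree uT hs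
    have hQ' := le_weightedTotalDegree uQ hs
    have hY' := le_weightedTotalDegree uY hs
    rw [weightT, hTF] at hT'
    rw [weightQ, hQF] at hQ'
    rw [weightY] at hY'
    exact ⟨by omega, by omega, by omega⟩
  have hclass : ∀ s ∈ F.support, s = 0 ∨ s = Finsupp.single 2 1 ∨ s = Finsupp.single 3 1
      ∨ s = Finsupp.single 4 1 := by
    intro s hs
    obtain ⟨hc0, hc1, hcY⟩ := hsupp s hs
    by_cases hc2 : s 2 = 1
    · right; left
      refine finsupp5_ext ?_ ?_ ?_ ?_ ?_ <;> simp [Finsupp.single_apply] <;> omega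
    · by_cases hc3 : s 3 = 1
      · right; right; left
        refine finsupp5_ext ?_ ?_ ?_ ?_ ?_ <;> simp [Finsupp.single_apply] <;> omega
      · by_cases hc4 : s 4 = 1
        · right; right; right
          refine finsupp5_ext ?_ ?_ ?_ ?_ ?_ <;> simp [Finsupp.single_apply] <;> omega
        · left
          refine finsupp5_ext ?_ ?_ ?_ ?_ ?_ <;> simp <;> omega
  have hsne : ∀ (i j : Fin 5), i ≠ j →
      (Finsupp.single i 1 : Fin 5 →₀ ℕ) ≠ Finsupp.single j 1 := by
    intro i j hij he
    have hval := DFunLike.congr_fun he i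
    rw [Finsupp.single_eq_same, Finsupp.single_eq_of_ne' (Ne.symm hij)] at hval
    exact one_ne_zero hval
  have hsnz : ∀ i : Fin 5, (Finsupp.single i 1 : Fin 5 →₀ ℕ) ≠ 0 := by
    intro i
    intro hcc
    exact one_ne_zero (Finsupp.single_eq_zero.mp hcc)
  refine ⟨hF, coeff (Finsupp.single 2 1) F, coeff (Finsupp.single 3 1) F,
    coeff (Finsupp.single 4 1) F, coeff 0 F, ?_⟩
  apply MvPolynomial.ext
  intro s
  rw [coeff_add, coeff_add, coeff_add, coeff_C_mul, coeff_C_mul, coeff_C_mul, coeff_C,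
    coeff_X', coeff_X', coeff_X']
  by_cases hs2 : s = Finsupp.single 2 1
  · subst hs2
    rw [if_pos rfl, if_neg (hsne 3 2 (by decide)), if_neg (hsne 4 2 (by decide)),
      if_neg (fun hcc => hsnz 2 hcc.symm)]
    ring
  · by_cases hs3 : s = Finsupp.single 3 1
    · subst hs3
      rw [if_pos rfl, if_neg (hsne 2 3 (by decide)), if_neg (hsne 4 3 (by decide)),
        if_neg (fun hcc => hsnz 3 hcc.symm)]
      ring
    · by_cases hs4 : s = Finsupp.single 4 1
      · subst hs4
        rw [if_pos rfl, if_neg (hsne 2 4 (by decide)), if_neg (hsne 3 4 (by decide)),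
          if_neg (fun hcc => hsnz 4 hcc.symm)]
        ring
      · by_cases hs0 : s = 0
        · subst hs0
          rw [if_pos rfl, if_neg (fun hcc => hsnz 2 hcc), if_neg (fun hcc => hsnz 3 hcc),
            if_neg (fun hcc => hsnz 4 hcc)]
          ring
        · have hcz : coeff s F = 0 := by
            by_contra hcc
            rcases hclass s (MvPolynomial.mem_support_iff.mpr hcc) with h | h | h | h
            · exact hs0 h
            · exact hs2 h
            · exact hs3 h
            · exact hs4 h
          rw [hcz, if_neg (fun hcc => hs2 hcc.symm), if_neg (fun hcc => hs3 hcc.symm),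
            if_neg (fun hcc => hs4 hcc.symm), if_neg (fun hcc => hs0 hcc.symm)]
          ring
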